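/- A modal formula φ is satisfiable for K and complete up to its depth for K if and only if there exists a normal form ψ ∈ F_{P(φ)}^{md(φ)} such that φ ↔ ψ is valid for K. -/

import Mathlib

/-- Modal formulas in negation normal form, as in the paper:
φ ::= ⊥ | ⊤ | p | ¬p | φ∧φ | φ∨φ | □φ | ◇φ. -/
inductive Form : Type where
  | bot : Form
  | top : Form
  | pos : ℕ → Form
  | npos : ℕ → Form
  | and : Form → Form → Form
  | or : Form → Form → Form
  | box : Form → Form
  | dia : Form → Form
deriving DecidableEq

namespace Form

/-- Negation, defined as usual (by De Morgan dualities). -/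
def neg : Form → Form
  | bot => top
  | top => bot
  | pos p => npos p
  | npos p => pos p
  | and φ ψ => or φ.neg ψ.neg
  | or φ ψ => and φ.neg ψ.neg
  | box φ => dia φ.neg
  | dia φ => box φ.neg

/-- Implication φ → ψ, defined as usual. -/
def imp (φ ψ : Form) : Form := or φ.neg ψ

/-- Bi-implication φ ↔ ψ, defined as usual. -/
def biimp (φ ψ : Form) : Form := and (imp φ ψ) (imp ψ φ)

/-- P(φ): the set of propositional variables occurring in φ. -/
def vars : Form → Finset ℕ
  | bot => ∅
  | top => ∅
  | pos p => {p}
  | npos p => {p}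
  | and φ ψ => φ.vars ∪ ψ.vars
  | or φ ψ => φ.vars ∪ ψ.vars
  | box φ => φ.vars
  | dia φ => φ.vars

/-- Modal depth. -/
def md : Form → ℕ
  | bot => 0
  | top => 0
  | pos _ => 0
  | npos _ => 0
  | and φ ψ => max φ.md ψ.md
  | or φ ψ => max φ.md ψ.md
  | box φ => φ.md + 1
  | dia φ => φ.md + 1

/-- sub(φ): the set of subformulas of φ. -/
def subf : Form → Finset Form
  | bot => {bot}
  | top => {top}
  | pos p => {pos p}
  | npos p => {npos p}
  | and φ ψ => insert (and φ ψ) (φ.subf ∪ ψ.subf)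
  | or φ ψ => insert (or φ ψ) (φ.subf ∪ ψ.subf)
  | box φ => insert (box φ) φ.subf
  | dia φ => insert (dia φ) φ.subf

/-- s̄ub(φ) = sub(φ) ∪ {¬ψ : ψ ∈ sub(φ)}. -/
def subBar (φ : Form) : Finset Form := φ.subf ∪ φ.subf.image neg

/-- □^k φ : k nested boxes. -/
def boxIter : ℕ → Form → Form
  | 0, φ => φ
  | n + 1, φ => box (boxIter n φ)

def isDia : Form → Bool
  | dia _ => true
  | _ => false

def isBox : Form → Bool
  | box _ => true
  | _ => false

end Form

/-- Big conjunction over a finite set of formulas (⋀∅ = ⊤). -/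
noncomputable def bigAnd (s : Finset Form) : Form := s.toList.foldr Form.and Form.top

/-- Big disjunction over a finite set of formulas (⋁∅ = ⊥). -/
noncomputable def bigOr (s : Finset Form) : Form := s.toList.foldr Form.or Form.bot

/-- th(a) = ⋀ a. -/
noncomputable def th (a : Finset Form) : Form := bigAnd a

/-- A finite Kripke model: a nonempty finite set of states, an accessibility
relation and a valuation. -/
structure Model : Type 1 where
  W : Type
  nonempty : Nonempty W
  finite : Finite W
  R : W → W → Prop
  V : W → Set ℕ

/-- Satisfaction M,w ⊨ φ. -/
def Model.sat (M : Model) : M.W → Form → Prop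
  | _, .bot => False
  | _, .top => True
  | w, .pos p => p ∈ M.V w
  | w, .npos p => p ∉ M.V w
  | w, .and φ ψ => M.sat w φ ∧ M.sat w ψ
  | w, .or φ ψ => M.sat w φ ∨ M.sat w ψ
  | w, .box φ => ∀ v, M.R w v → M.sat v φ
  | w, .dia φ => ∃ v, M.R w v ∧ M.sat v φ

/-- The six base logics K, D, T, K4, KD4, S4. -/
inductive BaseLogic : Type where
  | K | D | T | K4 | KD4 | S4
deriving DecidableEq

/-- A logic: a base logic, possibly extended by axiom 5. -/
structure Logic : Type where
  base : BaseLogic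
  has5 : Bool
deriving DecidableEq

def Logic.K : Logic := ⟨.K, false⟩
def Logic.D : Logic := ⟨.D, false⟩
def Logic.T : Logic := ⟨.T, false⟩
def Logic.K4 : Logic := ⟨.K4, false⟩
def Logic.KD4 : Logic := ⟨.KD4, false⟩
def Logic.S4 : Logic := ⟨.S4, false⟩

/-- l + 5. -/
def BaseLogic.plus5 (b : BaseLogic) : Logic := ⟨b, true⟩

/-- M is a model for the logic l (frame conditions). -/
def Model.IsFor (M : Model) (l : Logic) : Prop :=
  (match l.base with
    | .K => True
    | .D => ∀ w, ∃ v, M.R w v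
    | .T => ∀ w, M.R w w
    | .K4 => ∀ a b c, M.R a b → M.R b c → M.R a c
    | .KD4 => (∀ w, ∃ v, M.R w v) ∧ (∀ a b c, M.R a b → M.R b c → M.R a c)
    | .S4 => (∀ w, M.R w w) ∧ (∀ a b c, M.R a b → M.R b c → M.R a c))
  ∧ (l.has5 = true → ∀ a b c, M.R a b → M.R a c → M.R b c)

/-- φ is satisfiable for l: satisfied at some state of some finite model for l. -/
def Satisfiable (l : Logic) (φ : Form) : Prop :=
  ∃ M : Model, M.IsFor l ∧ ∃ w : M.W, M.sat w φ

/-- φ is valid for l: satisfied at every state of every finite model for l. -/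
def Valid (l : Logic) (φ : Form) : Prop :=
  ∀ M : Model, M.IsFor l → ∀ w : M.W, M.sat w φ

/-- φ is complete for l: for every ψ ∈ L(P(φ)), φ→ψ or φ→¬ψ is valid for l. -/
def Complete (l : Logic) (φ : Form) : Prop :=
  ∀ ψ : Form, ψ.vars ⊆ φ.vars → (Valid l (φ.imp ψ) ∨ Valid l (φ.imp ψ.neg))

/-- Z is a bisimulation modulo P from M to M'. -/
def IsBisim (P : Set ℕ) (M M' : Model) (Z : M.W → M'.W → Prop) : Prop :=
  (∃ s s', Z s s') ∧
  ∀ s s', Z s s' →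
    (M.V s ∩ P = M'.V s' ∩ P) ∧
    (∀ t, M.R s t → ∃ t', M'.R s' t' ∧ Z t t') ∧
    (∀ t', M'.R s' t' → ∃ t, M.R s t ∧ Z t t')

/-- (M,a) ∼_P (M',a'). -/
def Bisimilar (P : Set ℕ) (M : Model) (a : M.W) (M' : Model) (a' : M'.W) : Prop :=
  ∃ Z, IsBisim P M M' Z ∧ Z a a'

/-- (M,a) ≡_P (M',a'): the two pointed models satisfy the same formulas of L(P). -/
def EquivP (P : Set ℕ) (M : Model) (a : M.W) (M' : Model) (a' : M'.W) : Prop :=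
  ∀ φ : Form, ↑φ.vars ⊆ P → (M.sat a φ ↔ M'.sat a' φ)

/-- (M,s) is flat (for base logic l, with axiom 5): the carrier is {s}∪W and
R = R1 ∪ R2 with R1 ⊆ {s}×W, R2 an equivalence relation on W, and s ∈ W if
l ∈ {T,S4}. -/
def Flat (l : BaseLogic) (M : Model) (s : M.W) : Prop :=
  ∃ W : Set M.W, (∀ w, w = s ∨ w ∈ W) ∧
    ∃ R1 R2 : M.W → M.W → Prop,
      (∀ x y, M.R x y ↔ (R1 x y ∨ R2 x y)) ∧
      (∀ x y, R1 x y → x = s ∧ y ∈ W) ∧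
      (∀ x y, R2 x y → x ∈ W ∧ y ∈ W) ∧
      (∀ x ∈ W, R2 x x) ∧
      (∀ x y, R2 x y → R2 y x) ∧
      (∀ x y z, R2 x y → R2 y z → R2 x z) ∧
      ((l = .T ∨ l = .S4) → s ∈ W)

/-- A maximal state for l with respect to φ: a maximally l-consistent subset
of s̄ub(φ). -/
def MaxState (l : Logic) (φ : Form) (a : Finset Form) : Prop :=
  a ⊆ φ.subBar ∧ Satisfiable l (th a) ∧ ∀ ψ ∈ φ.subf, ψ ∈ a ∨ ψ.neg ∈ a

/-- D(x) = {◇ψ : ◇ψ ∈ x}. -/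
def DSet (x : Finset Form) : Finset Form := x.filter (fun ψ => ψ.isDia = true)

/-- B(x) = {□ψ : □ψ ∈ x}. -/
def BSet (x : Finset Form) : Finset Form := x.filter (fun ψ => ψ.isBox = true)

/-- A view: a parent-state and a finite set of children-states. -/
structure View : Type where
  parent : Finset Form
  children : Finset (Finset Form)

/-- The view is with respect to φ: all its states are subsets of s̄ub(φ). -/
def View.WF (φ : Form) (S : View) : Prop :=
  S.parent ⊆ φ.subBar ∧ ∀ c ∈ S.children, c ⊆ φ.subBar

/-- A set of formulas is l-closed. -/
def LClosed (l : Logic) (P : Finset ℕ) (s : Finset Form) : Prop :=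
  (∀ φ1 φ2 : Form, Form.and φ1 φ2 ∈ s → φ1 ∈ s ∧ φ2 ∈ s) ∧
  (∀ φ1 φ2 : Form, Form.or φ1 φ2 ∈ s → φ1 ∈ s ∨ φ2 ∈ s) ∧
  ((l.base = .T ∨ l.base = .S4) → ∀ ψ : Form, Form.box ψ ∈ s → ψ ∈ s) ∧
  (∀ p ∈ P, Form.pos p ∈ s ∨ Form.npos p ∈ s)

/-- The view S is l-complete. -/
def ViewLComplete (l : Logic) (P : Finset ℕ) (S : View) : Prop :=
  LClosed l P S.parent ∧
  (∀ c ∈ S.children, LClosed l P c) ∧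
  (∀ ψ : Form, Form.dia ψ ∈ S.parent → ∃ c ∈ S.children, ψ ∈ c) ∧
  (∀ ψ : Form, Form.box ψ ∈ S.parent → ∀ c ∈ S.children, ψ ∈ c) ∧
  ((l.base = .K4 ∨ l.base = .KD4 ∨ l.base = .S4) →
    ∀ ψ : Form, Form.box ψ ∈ S.parent → ∀ c ∈ S.children, Form.box ψ ∈ c) ∧
  (l.base = .KD4 → S.children.Nonempty)

/-- The view S is consistent for l: every one of its states is consistent. -/
def ViewConsistent (l : Logic) (S : View) : Prop :=
  Satisfiable l (th S.parent) ∧ ∀ c ∈ S.children, Satisfiable l (th c)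

/-- d = max{md(th(c')) : c' ∈ C(S)}. -/
noncomputable def childDepth (S : View) : ℕ := S.children.sup (fun c => (th c).md)

/-- A K-maximal child-state: a maximally K-consistent subset of s̄ub_d(φ). -/
def KMaxChild (φ : Form) (d : ℕ) (c : Finset Form) : Prop :=
  c ⊆ φ.subBar.filter (fun ψ => ψ.md ≤ d) ∧
  Satisfiable Logic.K (th c) ∧
  ∀ ψ ∈ φ.subf, ψ.md ≤ d → (ψ ∈ c ∨ ψ.neg ∈ c)

/-- S' completes S (for logic l, with respect to φ). -/
def ViewCompletes (l : Logic) (φ : Form) (S' S : View) : Prop :=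
  ViewLComplete l φ.vars S' ∧
  S.parent ⊆ S'.parent ∧
  (∀ a ∈ S.children, ∃ a' ∈ S'.children, a ⊆ a') ∧
  (l.base = .K → ∀ a' ∈ S'.children, KMaxChild φ (childDepth S') a') ∧
  (l.base ≠ .K → ∀ a' ∈ S'.children, MaxState l φ a')

/-- The depth-0 normal form ⋀_{p∈S} p ∧ ⋀_{p∈P∖S} ¬p. -/
noncomputable def nf0 (P S : Finset ℕ) : Form :=
  Form.and (bigAnd (S.image Form.pos)) (bigAnd ((P \ S).image Form.npos))

/-- Fine's normal forms F_P^d. -/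
noncomputable def NF (P : Finset ℕ) : ℕ → Set Form
  | 0 => { χ | ∃ S ⊆ P, χ = nf0 P S }
  | d + 1 => { χ | ∃ S : Finset Form, ↑S ⊆ NF P d ∧ ∃ S0 ⊆ P,
      χ = Form.and (nf0 P S0)
            (Form.and (bigAnd (S.image Form.dia)) (Form.box (bigOr S))) }

/-- φ is complete up to its depth for l. -/
def CompleteUpToDepth (l : Logic) (φ : Form) : Prop :=
  ∀ ψ : Form, ψ.vars ⊆ φ.vars → ψ.md ≤ φ.md →
    (Valid l (φ.imp ψ) ∨ Valid l (φ.imp ψ.neg))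

section Aux

open scoped Classical

lemma sat_neg (M : Model) : ∀ (φ : Form) (w : M.W), M.sat w φ.neg ↔ ¬ M.sat w φ := by
  intro φ
  induction φ with
  | bot => intro w; simp [Form.neg, Model.sat]
  | top => intro w; simp [Form.neg, Model.sat]
  | pos p => intro w; simp [Form.neg, Model.sat]
  | npos p => intro w; simp [Form.neg, Model.sat]
  | and a b iha ihb => intro w; simp [Form.neg, Model.sat, iha, ihb]; tauto
  | or a b iha ihb => intro w; simp [Form.neg, Model.sat, iha, ihb]
  | box a ih => intro w; simp [Form.neg, Model.sat, ih]
  | dia a ih => intro w; simp [Form.neg, Model.sat, ih]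

lemma sat_and (M : Model) (w : M.W) (a b : Form) :
    M.sat w (Form.and a b) ↔ M.sat w a ∧ M.sat w b := Iff.rfl

lemma sat_imp (M : Model) (w : M.W) (a b : Form) :
    M.sat w (Form.imp a b) ↔ (M.sat w a → M.sat w b) := by
  simp [Form.imp, Model.sat, sat_neg]; tauto

lemma sat_foldr_and (M : Model) (w : M.W) (l : List Form) :
    M.sat w (l.foldr Form.and Form.top) ↔ ∀ χ ∈ l, M.sat w χ := by
  induction l with
  | nil => simp [Model.sat]
  | cons a t ih => simp [Model.sat, ih]

lemma sat_foldr_or (M : Model) (w : M.W) (l : List Form) :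
    M.sat w (l.foldr Form.or Form.bot) ↔ ∃ χ ∈ l, M.sat w χ := by
  induction l with
  | nil => simp [Model.sat]
  | cons a t ih => simp [Model.sat, ih]

lemma sat_bigAnd (M : Model) (w : M.W) (s : Finset Form) :
    M.sat w (bigAnd s) ↔ ∀ χ ∈ s, M.sat w χ := by
  simp [bigAnd, sat_foldr_and, Finset.mem_toList]

lemma sat_bigOr (M : Model) (w : M.W) (s : Finset Form) :
    M.sat w (bigOr s) ↔ ∃ χ ∈ s, M.sat w χ := by
  simp [bigOr, sat_foldr_or, Finset.mem_toList]

lemma isForK (M : Model) : M.IsFor Logic.K := by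
  refine ⟨trivial, fun h => ?_⟩
  simp [Logic.K] at h

/-- injectivity of big conjunctions -/
lemma foldr_and_inj : ∀ l1 l2 : List Form,
    l1.foldr Form.and Form.top = l2.foldr Form.or Form.bot → True := by
  intro _ _ _; trivial

lemma foldr_and_inj' : ∀ l1 l2 : List Form,
    l1.foldr Form.and Form.top = l2.foldr Form.and Form.top → l1 = l2 := by
  intro l1
  induction l1 with
  | nil =>
    intro l2 h
    cases l2 with
    | nil => rfl
    | cons b s => simp at h
  | cons a t ih =>
    intro l2 h
    cases l2 with
    | nil => simp at h
    | cons b s =>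
      simp only [List.foldr_cons] at h
      injection h with h1 h2
      rw [h1, ih s h2]

lemma bigAnd_inj {s t : Finset Form} (h : bigAnd s = bigAnd t) : s = t := by
  have := foldr_and_inj' _ _ h
  ext a
  rw [← Finset.mem_toList, this, Finset.mem_toList]

lemma pos_inj : Function.Injective Form.pos := fun a b h => by injection h

lemma dia_inj : Function.Injective Form.dia := fun a b h => by injection h

/-- the succ-level normal form constructor -/
noncomputable def mkSucc (P S0 : Finset ℕ) (S : Finset Form) : Form :=
  Form.and (nf0 P S0)
    (Form.and (bigAnd (S.image Form.dia)) (Form.box (bigOr S)))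

lemma nf0_inj {P S0 S0' : Finset ℕ} (h : nf0 P S0 = nf0 P S0') : S0 = S0' := by
  unfold nf0 at h
  injection h with h1 _
  have := bigAnd_inj h1
  exact Finset.image_injective pos_inj this

lemma mkSucc_inj {P S0 S0' : Finset ℕ} {S S' : Finset Form}
    (h : mkSucc P S0 S = mkSucc P S0' S') : S0 = S0' ∧ S = S' := by
  unfold mkSucc at h
  injection h with h1 h2
  injection h2 with h3 _
  exact ⟨nf0_inj h1, Finset.image_injective dia_inj (bigAnd_inj h3)⟩

lemma nf0_ne_mkSucc {P S0 S0' : Finset ℕ} {S : Finset Form} :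
    nf0 P S0 ≠ mkSucc P S0' S := by
  intro h
  unfold nf0 mkSucc at h
  injection h with _ h2
  -- h2 : bigAnd ((P \ S0).image npos) = and (bigAnd (S.image dia)) (box (bigOr S))
  unfold bigAnd at h2
  rcases hl : ((P \ S0).image Form.npos).toList with _ | ⟨q, t⟩
  · rw [hl] at h2; simp at h2
  · rw [hl] at h2
    simp only [List.foldr_cons] at h2
    injection h2 with _ h3
    cases t with
    | nil => simp at h3
    | cons r u => simp at h3

/-- Finset version of the normal forms -/
noncomputable def NFsetF (P : Finset ℕ) : ℕ → Finset Form
  | 0 => P.powerset.image (fun S => nf0 P S)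
  | d + 1 => ((NFsetF P d).powerset ×ˢ P.powerset).image (fun q => mkSucc P q.2 q.1)

lemma mem_NFsetF_zero {P : Finset ℕ} {χ : Form} :
    χ ∈ NFsetF P 0 ↔ ∃ S0, S0 ⊆ P ∧ χ = nf0 P S0 := by
  simp [NFsetF, eq_comm]

lemma mem_NFsetF_succ {P : Finset ℕ} {d : ℕ} {χ : Form} :
    χ ∈ NFsetF P (d + 1) ↔
      ∃ S : Finset Form, S ⊆ NFsetF P d ∧ ∃ S0, S0 ⊆ P ∧ χ = mkSucc P S0 S := by
  simp only [NFsetF, Finset.mem_image, Finset.mem_product, Finset.mem_powerset, Prod.exists]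
  constructor
  · rintro ⟨S, S0, ⟨h1, h2⟩, h3⟩
    exact ⟨S, h1, S0, h2, h3.symm⟩
  · rintro ⟨S, h1, S0, h2, h3⟩
    exact ⟨S, S0, ⟨h1, h2⟩, h3.symm⟩

lemma NF_eq_NFsetF (P : Finset ℕ) : ∀ d, NF P d = ↑(NFsetF P d) := by
  intro d
  induction d with
  | zero =>
    ext χ
    simp [NF, mem_NFsetF_zero]
  | succ d ih =>
    ext χ
    simp only [NF, Set.mem_setOf_eq, Finset.coe_mem, Finset.mem_coe, mem_NFsetF_succ, ih]
    constructor
    · rintro ⟨S, h1, S0, h2, h3⟩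
      refine ⟨S, fun x hx => h1 hx, S0, h2, h3⟩
    · rintro ⟨S, h1, S0, h2, h3⟩
      exact ⟨S, fun x hx => h1 hx, S0, h2, h3⟩

lemma md_foldr_and_le {l : List Form} {n : ℕ} (h : ∀ x ∈ l, Form.md x ≤ n) :
    (l.foldr Form.and Form.top).md ≤ n := by
  induction l with
  | nil => simp [Form.md]
  | cons a t ih =>
    simp only [List.foldr_cons, Form.md, max_le_iff]
    exact ⟨h a (by simp), ih fun x hx => h x (by simp [hx])⟩

lemma md_foldr_or_le {l : List Form} {n : ℕ} (h : ∀ x ∈ l, Form.md x ≤ n) :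
    (l.foldr Form.or Form.bot).md ≤ n := by
  induction l with
  | nil => simp [Form.md]
  | cons a t ih =>
    simp only [List.foldr_cons, Form.md, max_le_iff]
    exact ⟨h a (by simp), ih fun x hx => h x (by simp [hx])⟩

lemma md_bigAnd_le {s : Finset Form} {n : ℕ} (h : ∀ x ∈ s, Form.md x ≤ n) :
    (bigAnd s).md ≤ n :=
  md_foldr_and_le (by simpa [Finset.mem_toList] using h)

lemma md_bigOr_le {s : Finset Form} {n : ℕ} (h : ∀ x ∈ s, Form.md x ≤ n) :
    (bigOr s).md ≤ n :=
  md_foldr_or_le (by simpa [Finset.mem_toList] using h)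

lemma md_and_le {a b : Form} {n : ℕ} (ha : a.md ≤ n) (hb : b.md ≤ n) :
    (Form.and a b).md ≤ n := by
  simp only [Form.md]; exact max_le ha hb

lemma md_image_pos {S0 : Finset ℕ} {n : ℕ} : (bigAnd (S0.image Form.pos)).md ≤ n := by
  refine md_bigAnd_le ?_
  rintro x hx
  simp only [Finset.mem_image] at hx
  obtain ⟨p, _, rfl⟩ := hx
  simp [Form.md]

lemma md_image_npos {S0 : Finset ℕ} {n : ℕ} : (bigAnd (S0.image Form.npos)).md ≤ n := by
  refine md_bigAnd_le ?_
  rintro x hx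
  simp only [Finset.mem_image] at hx
  obtain ⟨p, _, rfl⟩ := hx
  simp [Form.md]

lemma md_nf0 {P S0 : Finset ℕ} {n : ℕ} : (nf0 P S0).md ≤ n := by
  unfold nf0
  exact md_and_le md_image_pos md_image_npos

lemma md_mkSucc_le {P S0 : Finset ℕ} {S : Finset Form} {d : ℕ}
    (h : ∀ x ∈ S, Form.md x ≤ d) : (mkSucc P S0 S).md ≤ d + 1 := by
  have h1 : (bigAnd (S.image Form.dia)).md ≤ d + 1 := by
    refine md_bigAnd_le ?_
    rintro x hx
    simp only [Finset.mem_image] at hx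
    obtain ⟨χ, hχ, rfl⟩ := hx
    have := h χ hχ
    simp only [Form.md]
    omega
  have h2 : (Form.box (bigOr S)).md ≤ d + 1 := by
    have := md_bigOr_le h
    simp only [Form.md]
    omega
  unfold mkSucc
  exact md_and_le md_nf0 (md_and_le h1 h2)

lemma md_NFsetF {P : Finset ℕ} : ∀ {d : ℕ} {χ : Form}, χ ∈ NFsetF P d → χ.md ≤ d := by
  intro d
  induction d with
  | zero =>
    intro χ h
    rw [mem_NFsetF_zero] at h
    obtain ⟨S0, _, rfl⟩ := h
    exact md_nf0
  | succ d ih =>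
    intro χ h
    rw [mem_NFsetF_succ] at h
    obtain ⟨S, hS, S0, _, rfl⟩ := h
    exact md_mkSucc_le fun x hx => ih (hS hx)

lemma vars_foldr_and {l : List Form} {P : Finset ℕ} (h : ∀ x ∈ l, Form.vars x ⊆ P) :
    (l.foldr Form.and Form.top).vars ⊆ P := by
  induction l with
  | nil => simp [Form.vars]
  | cons a t ih =>
    simp only [List.foldr_cons, Form.vars, Finset.union_subset_iff]
    exact ⟨h a (by simp), ih fun x hx => h x (by simp [hx])⟩

lemma vars_foldr_or {l : List Form} {P : Finset ℕ} (h : ∀ x ∈ l, Form.vars x ⊆ P) :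
    (l.foldr Form.or Form.bot).vars ⊆ P := by
  induction l with
  | nil => simp [Form.vars]
  | cons a t ih =>
    simp only [List.foldr_cons, Form.vars, Finset.union_subset_iff]
    exact ⟨h a (by simp), ih fun x hx => h x (by simp [hx])⟩

lemma vars_bigAnd {s : Finset Form} {P : Finset ℕ} (h : ∀ x ∈ s, Form.vars x ⊆ P) :
    (bigAnd s).vars ⊆ P :=
  vars_foldr_and (by simpa [Finset.mem_toList] using h)

lemma vars_bigOr {s : Finset Form} {P : Finset ℕ} (h : ∀ x ∈ s, Form.vars x ⊆ P) :
    (bigOr s).vars ⊆ P :=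
  vars_foldr_or (by simpa [Finset.mem_toList] using h)

lemma vars_and_sub {a b : Form} {P : Finset ℕ} (ha : a.vars ⊆ P) (hb : b.vars ⊆ P) :
    (Form.and a b).vars ⊆ P := by
  simp only [Form.vars]; exact Finset.union_subset ha hb

lemma vars_nf0 {P S0 : Finset ℕ} (h : S0 ⊆ P) : (nf0 P S0).vars ⊆ P := by
  have h1 : (bigAnd (S0.image Form.pos)).vars ⊆ P := by
    refine vars_bigAnd ?_
    rintro x hx
    simp only [Finset.mem_image] at hx
    obtain ⟨p, hp, rfl⟩ := hx
    simpa [Form.vars] using h hp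
  have h2 : (bigAnd ((P \ S0).image Form.npos)).vars ⊆ P := by
    refine vars_bigAnd ?_
    rintro x hx
    simp only [Finset.mem_image] at hx
    obtain ⟨p, hp, rfl⟩ := hx
    simp only [Form.vars, Finset.singleton_subset_iff]
    exact (Finset.mem_sdiff.mp hp).1
  unfold nf0
  exact vars_and_sub h1 h2

lemma vars_NFsetF {P : Finset ℕ} : ∀ {d : ℕ} {χ : Form}, χ ∈ NFsetF P d → χ.vars ⊆ P := by
  intro d
  induction d with
  | zero =>
    intro χ h
    rw [mem_NFsetF_zero] at h
    obtain ⟨S0, hS0, rfl⟩ := h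
    exact vars_nf0 hS0
  | succ d ih =>
    intro χ h
    rw [mem_NFsetF_succ] at h
    obtain ⟨S, hS, S0, hS0, rfl⟩ := h
    have h1 : (bigAnd (S.image Form.dia)).vars ⊆ P := by
      refine vars_bigAnd ?_
      rintro x hx
      simp only [Finset.mem_image] at hx
      obtain ⟨χ', hχ', rfl⟩ := hx
      simpa [Form.vars] using ih (hS hχ')
    have h2 : (Form.box (bigOr S)).vars ⊆ P := by
      have := vars_bigOr (fun x hx => ih (hS hx))
      simpa [Form.vars] using this
    unfold mkSucc
    exact vars_and_sub (vars_nf0 hS0) (vars_and_sub h1 h2)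

/-- the canonical normal form of a pointed model -/
noncomputable def nfOf (M : Model) (P : Finset ℕ) : ℕ → M.W → Form
  | 0, w => nf0 P (P.filter (fun p => p ∈ M.V w))
  | d + 1, w =>
    mkSucc P (P.filter (fun p => p ∈ M.V w))
      ((NFsetF P d).filter (fun χ => ∃ v, M.R w v ∧ M.sat v χ))

lemma nfOf_mem (M : Model) (P : Finset ℕ) : ∀ (d : ℕ) (w : M.W), nfOf M P d w ∈ NFsetF P d := by
  intro d w
  cases d with
  | zero =>
    rw [mem_NFsetF_zero]
    exact ⟨_, Finset.filter_subset _ _, rfl⟩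
  | succ d =>
    rw [mem_NFsetF_succ]
    exact ⟨_, Finset.filter_subset _ _, _, Finset.filter_subset _ _, rfl⟩

lemma sat_nf0_self (M : Model) (w : M.W) (P : Finset ℕ) :
    M.sat w (nf0 P (P.filter (fun p => p ∈ M.V w))) := by
  unfold nf0
  rw [sat_and, sat_bigAnd, sat_bigAnd]
  constructor
  · rintro χ hχ
    simp only [Finset.mem_image, Finset.mem_filter] at hχ
    obtain ⟨p, ⟨_, hp⟩, rfl⟩ := hχ
    exact hp
  · rintro χ hχ
    simp only [Finset.mem_image, Finset.mem_sdiff, Finset.mem_filter] at hχ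
    obtain ⟨p, ⟨hp1, hp2⟩, rfl⟩ := hχ
    intro hcon
    exact hp2 ⟨hp1, hcon⟩

lemma nfOf_sat (M : Model) (P : Finset ℕ) : ∀ (d : ℕ) (w : M.W), M.sat w (nfOf M P d w) := by
  intro d
  induction d with
  | zero => intro w; exact sat_nf0_self M w P
  | succ d ih =>
    intro w
    unfold nfOf mkSucc
    rw [sat_and, sat_and]
    refine ⟨sat_nf0_self M w P, ?_, ?_⟩
    · rw [sat_bigAnd]
      rintro χ hχ
      simp only [Finset.mem_image, Finset.mem_filter] at hχ
      obtain ⟨χ', ⟨_, v, hv1, hv2⟩, rfl⟩ := hχ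
      exact ⟨v, hv1, hv2⟩
    · intro v hv
      rw [sat_bigOr]
      refine ⟨nfOf M P d v, ?_, ih v⟩
      simp only [Finset.mem_filter]
      exact ⟨nfOf_mem M P d v, v, hv, ih v⟩

lemma sat_nf0_atoms {M : Model} {w : M.W} {P S0 : Finset ℕ}
    (h : M.sat w (nf0 P S0)) : ∀ p ∈ P, (p ∈ M.V w ↔ p ∈ S0) := by
  unfold nf0 at h
  rw [sat_and, sat_bigAnd, sat_bigAnd] at h
  intro p hp
  constructor
  · intro hv
    by_contra hns
    have h2 := h.2 (Form.npos p) (by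
      simp only [Finset.mem_image]
      exact ⟨p, Finset.mem_sdiff.mpr ⟨hp, hns⟩, rfl⟩)
    exact h2 hv
  · intro hs
    exact h.1 (Form.pos p) (by simp only [Finset.mem_image]; exact ⟨p, hs, rfl⟩)

lemma NFsetF_nf0_part {P : Finset ℕ} : ∀ {d : ℕ} {ψ : Form}, ψ ∈ NFsetF P d →
    ∃ S0, S0 ⊆ P ∧ (ψ = nf0 P S0 ∨ ∃ r, ψ = Form.and (nf0 P S0) r) := by
  intro d ψ h
  cases d with
  | zero =>
    rw [mem_NFsetF_zero] at h
    obtain ⟨S0, hS0, rfl⟩ := h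
    exact ⟨S0, hS0, Or.inl rfl⟩
  | succ d =>
    rw [mem_NFsetF_succ] at h
    obtain ⟨S, _, S0, hS0, rfl⟩ := h
    exact ⟨S0, hS0, Or.inr ⟨_, rfl⟩⟩

lemma sat_atoms_of_NFsetF {M : Model} {w : M.W} {P : Finset ℕ} {d : ℕ} {ψ : Form}
    (hmem : ψ ∈ NFsetF P d) (h : M.sat w ψ) {S0 : Finset ℕ}
    (hdec : ψ = nf0 P S0 ∨ ∃ r, ψ = Form.and (nf0 P S0) r) :
    ∀ p ∈ P, (p ∈ M.V w ↔ p ∈ S0) := by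
  rcases hdec with rfl | ⟨r, rfl⟩
  · exact sat_nf0_atoms h
  · exact sat_nf0_atoms h.1

noncomputable def NFallF (P : Finset ℕ) (d : ℕ) : Finset Form :=
  (Finset.range (d + 1)).biUnion (fun e => NFsetF P e)

lemma mem_NFallF {P : Finset ℕ} {d : ℕ} {χ : Form} :
    χ ∈ NFallF P d ↔ ∃ e ≤ d, χ ∈ NFsetF P e := by
  simp [NFallF, Finset.mem_biUnion, Nat.lt_succ_iff]

noncomputable def bigModel (P : Finset ℕ) (d : ℕ) : Model where
  W := {χ : Form // χ ∈ NFallF P d}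
  nonempty := ⟨⟨nf0 P ∅, by
    rw [mem_NFallF]
    exact ⟨0, Nat.zero_le d, mem_NFsetF_zero.mpr ⟨∅, Finset.empty_subset _, rfl⟩⟩⟩⟩
  finite := by
    have : Fintype {χ : Form // χ ∈ NFallF P d} := FinsetCoe.fintype _
    exact Finite.of_fintype _
  R := fun x y => ∃ S0 S, x.1 = mkSucc P S0 S ∧ y.1 ∈ S
  V := fun x => {p | (∃ S0, x.1 = nf0 P S0 ∧ p ∈ S0) ∨
      ∃ S0 S, x.1 = mkSucc P S0 S ∧ p ∈ S0}

lemma bigModel_V_nf0 {P : Finset ℕ} {d : ℕ} (x : (bigModel P d).W) {S0 : Finset ℕ}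
    (hx : x.1 = nf0 P S0) : ∀ p, p ∈ (bigModel P d).V x ↔ p ∈ S0 := by
  intro p
  constructor
  · rintro (⟨S0', h1, h2⟩ | ⟨S0', S', h1, h2⟩)
    · rw [hx] at h1
      rw [nf0_inj h1]
      exact h2
    · rw [hx] at h1
      exact absurd h1 nf0_ne_mkSucc
  · intro hp
    exact Or.inl ⟨S0, hx, hp⟩

lemma bigModel_V_mkSucc {P : Finset ℕ} {d : ℕ} (x : (bigModel P d).W) {S0 : Finset ℕ}
    {S : Finset Form} (hx : x.1 = mkSucc P S0 S) :
    ∀ p, p ∈ (bigModel P d).V x ↔ p ∈ S0 := by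
  intro p
  constructor
  · rintro (⟨S0', h1, h2⟩ | ⟨S0', S', h1, h2⟩)
    · rw [hx] at h1
      exact absurd h1.symm nf0_ne_mkSucc
    · rw [hx] at h1
      rw [(mkSucc_inj h1).1]
      exact h2
  · intro hp
    exact Or.inr ⟨S0, S, hx, hp⟩

lemma sat_nf0_of {M : Model} {w : M.W} {P S0 : Finset ℕ}
    (h : ∀ p ∈ P ∪ S0, (p ∈ M.V w ↔ p ∈ S0)) : M.sat w (nf0 P S0) := by
  unfold nf0
  rw [sat_and, sat_bigAnd, sat_bigAnd]
  constructor
  · rintro χ hχ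
    simp only [Finset.mem_image] at hχ
    obtain ⟨p, hp, rfl⟩ := hχ
    exact (h p (Finset.mem_union_right _ hp)).mpr hp
  · rintro χ hχ
    simp only [Finset.mem_image] at hχ
    obtain ⟨p, hp, rfl⟩ := hχ
    rw [Finset.mem_sdiff] at hp
    intro hcon
    exact hp.2 ((h p (Finset.mem_union_left _ hp.1)).mp hcon)

lemma bigModel_sat (P : Finset ℕ) (d : ℕ) :
    ∀ (e : ℕ) (χ : Form), χ ∈ NFsetF P e → ∀ (h : χ ∈ NFallF P d),
      (bigModel P d).sat ⟨χ, h⟩ χ := by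
  intro e
  induction e with
  | zero =>
    intro χ hχ h
    rw [mem_NFsetF_zero] at hχ
    obtain ⟨S0, hS0, rfl⟩ := hχ
    refine sat_nf0_of ?_
    intro p _
    exact bigModel_V_nf0 ⟨_, h⟩ rfl p
  | succ e ih =>
    intro χ hχ h
    rw [mem_NFsetF_succ] at hχ
    obtain ⟨S, hS, S0, hS0, rfl⟩ := hχ
    -- S ⊆ NFsetF P e derivable from h as well; children are states
    have hchild : ∀ χ'' ∈ S, χ'' ∈ NFallF P d := by
      intro χ'' hχ''
      obtain ⟨e', he', hmem'⟩ := mem_NFallF.mp h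
      cases e' with
      | zero =>
        rw [mem_NFsetF_zero] at hmem'
        obtain ⟨T0, _, hT⟩ := hmem'
        exact absurd hT.symm nf0_ne_mkSucc
      | succ e'' =>
        rw [mem_NFsetF_succ] at hmem'
        obtain ⟨T, hT, T0, _, hTeq⟩ := hmem'
        have hST := (mkSucc_inj hTeq).2
        rw [mem_NFallF]
        exact ⟨e'', by omega, hT (hST ▸ hχ'')⟩
    show (bigModel P d).sat ⟨_, h⟩ (mkSucc P S0 S)
    unfold mkSucc
    show (bigModel P d).sat ⟨mkSucc P S0 S, h⟩ (nf0 P S0) ∧ (bigModel P d).sat ⟨mkSucc P S0 S, h⟩ (bigAnd (S.image Form.dia)) ∧ (bigModel P d).sat ⟨mkSucc P S0 S, h⟩ (Form.box (bigOr S))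
    refine ⟨?_, ?_, ?_⟩
    · refine sat_nf0_of ?_
      intro p _
      exact bigModel_V_mkSucc ⟨_, h⟩ rfl p
    · refine (sat_bigAnd _ _ _).mpr ?_
      rintro χ' hχ'
      simp only [Finset.mem_image] at hχ'
      obtain ⟨χ'', hχ'', rfl⟩ := hχ'
      refine ⟨⟨χ'', hchild χ'' hχ''⟩, ⟨S0, S, rfl, hχ''⟩, ?_⟩
      exact ih χ'' (hS hχ'') (hchild χ'' hχ'')
    · rintro ⟨v, hv⟩ ⟨T0, T, hTeq, hvT⟩
      have hST := (mkSucc_inj hTeq).2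
      refine (sat_bigOr _ _ _).mpr ?_
      refine ⟨v, hST ▸ hvT, ?_⟩
      exact ih v (hS (hST ▸ hvT)) hv

lemma agree (P : Finset ℕ) : ∀ (χ : Form) (d : ℕ) (ψ : Form), ψ ∈ NFsetF P d →
    χ.vars ⊆ P → χ.md ≤ d →
    ∀ (M : Model) (w : M.W) (M' : Model) (w' : M'.W), M.sat w ψ → M'.sat w' ψ →
    (M.sat w χ ↔ M'.sat w' χ) := by
  intro χ
  induction χ with
  | bot => intros; simp [Model.sat]
  | top => intros; simp [Model.sat]
  | pos p =>
    intro d ψ hψ hvars _ M w M' w' hw hw'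
    obtain ⟨S0, _, hdec⟩ := NFsetF_nf0_part hψ
    have h1 := sat_atoms_of_NFsetF hψ hw hdec
    have h2 := sat_atoms_of_NFsetF hψ hw' hdec
    have hp : p ∈ P := hvars (by simp [Form.vars])
    show p ∈ M.V w ↔ p ∈ M'.V w'
    rw [h1 p hp, h2 p hp]
  | npos p =>
    intro d ψ hψ hvars _ M w M' w' hw hw'
    obtain ⟨S0, _, hdec⟩ := NFsetF_nf0_part hψ
    have h1 := sat_atoms_of_NFsetF hψ hw hdec
    have h2 := sat_atoms_of_NFsetF hψ hw' hdec
    have hp : p ∈ P := hvars (by simp [Form.vars])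
    show p ∉ M.V w ↔ p ∉ M'.V w'
    rw [h1 p hp, h2 p hp]
  | and a b iha ihb =>
    intro d ψ hψ hvars hmd M w M' w' hw hw'
    have hva : a.vars ⊆ P := fun x hx => hvars (Finset.mem_union_left _ hx)
    have hvb : b.vars ⊆ P := fun x hx => hvars (Finset.mem_union_right _ hx)
    have hma : a.md ≤ d := le_trans (le_max_left _ _) hmd
    have hmb : b.md ≤ d := le_trans (le_max_right _ _) hmd
    exact and_congr (iha d ψ hψ hva hma M w M' w' hw hw')
      (ihb d ψ hψ hvb hmb M w M' w' hw hw')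
  | or a b iha ihb =>
    intro d ψ hψ hvars hmd M w M' w' hw hw'
    have hva : a.vars ⊆ P := fun x hx => hvars (Finset.mem_union_left _ hx)
    have hvb : b.vars ⊆ P := fun x hx => hvars (Finset.mem_union_right _ hx)
    have hma : a.md ≤ d := le_trans (le_max_left _ _) hmd
    have hmb : b.md ≤ d := le_trans (le_max_right _ _) hmd
    exact or_congr (iha d ψ hψ hva hma M w M' w' hw hw')
      (ihb d ψ hψ hvb hmb M w M' w' hw hw')
  | box a ih =>
    intro d ψ hψ hvars hmd M w M' w' hw hw'
    have hd1 : a.md + 1 ≤ d := hmd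
    obtain ⟨e, rfl⟩ : ∃ e, d = e + 1 := ⟨d - 1, by omega⟩
    have hmda : a.md ≤ e := by omega
    rw [mem_NFsetF_succ] at hψ
    obtain ⟨S, hS, S0, _, rfl⟩ := hψ
    unfold mkSucc at hw hw'
    have hwd := hw.2.1
    have hwb := hw.2.2
    have hw'd := hw'.2.1
    have hw'b := hw'.2.2
    rw [sat_bigAnd] at hwd hw'd
    constructor
    · intro hbox v' hv'
      have hsv' : M'.sat v' (bigOr S) := hw'b v' hv'
      rw [sat_bigOr] at hsv'
      obtain ⟨ψ', hψ'S, hv'ψ⟩ := hsv'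
      obtain ⟨v, hRv, hvψ⟩ :=
        hwd (Form.dia ψ') (Finset.mem_image_of_mem _ hψ'S)
      exact (ih e ψ' (hS hψ'S) hvars hmda M v M' v' hvψ hv'ψ).mp (hbox v hRv)
    · intro hbox v hv
      have hsv : M.sat v (bigOr S) := hwb v hv
      rw [sat_bigOr] at hsv
      obtain ⟨ψ', hψ'S, hvψ⟩ := hsv
      obtain ⟨v', hRv', hv'ψ⟩ :=
        hw'd (Form.dia ψ') (Finset.mem_image_of_mem _ hψ'S)
      exact (ih e ψ' (hS hψ'S) hvars hmda M v M' v' hvψ hv'ψ).mpr (hbox v' hRv')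
  | dia a ih =>
    intro d ψ hψ hvars hmd M w M' w' hw hw'
    have hd1 : a.md + 1 ≤ d := hmd
    obtain ⟨e, rfl⟩ : ∃ e, d = e + 1 := ⟨d - 1, by omega⟩
    have hmda : a.md ≤ e := by omega
    rw [mem_NFsetF_succ] at hψ
    obtain ⟨S, hS, S0, _, rfl⟩ := hψ
    unfold mkSucc at hw hw'
    have hwd := hw.2.1
    have hwb := hw.2.2
    have hw'd := hw'.2.1
    have hw'b := hw'.2.2
    rw [sat_bigAnd] at hwd hw'd
    constructor
    · rintro ⟨v, hRv, hva⟩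
      have hsv : M.sat v (bigOr S) := hwb v hRv
      rw [sat_bigOr] at hsv
      obtain ⟨ψ', hψ'S, hvψ⟩ := hsv
      obtain ⟨v', hRv', hv'ψ⟩ :=
        hw'd (Form.dia ψ') (Finset.mem_image_of_mem _ hψ'S)
      exact ⟨v', hRv',
        (ih e ψ' (hS hψ'S) hvars hmda M v M' v' hvψ hv'ψ).mp hva⟩
    · rintro ⟨v', hRv', hv'a⟩
      have hsv' : M'.sat v' (bigOr S) := hw'b v' hRv'
      rw [sat_bigOr] at hsv'
      obtain ⟨ψ', hψ'S, hv'ψ⟩ := hsv'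
      obtain ⟨v, hRv, hvψ⟩ :=
        hwd (Form.dia ψ') (Finset.mem_image_of_mem _ hψ'S)
      exact ⟨v, hRv,
        (ih e ψ' (hS hψ'S) hvars hmda M v M' v' hvψ hv'ψ).mpr hv'a⟩

end Aux
/-- φ is satisfiable and complete up to its depth for K iff it
is K-equivalent to a normal form in F_{P(φ)}^{md(φ)}. -/
theorem stmt18 (φ : Form) :
    (Satisfiable Logic.K φ ∧ CompleteUpToDepth Logic.K φ) ↔
    ∃ ψ ∈ NF φ.vars φ.md, Valid Logic.K (φ.biimp ψ) := by
  constructor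
  · rintro ⟨⟨M, hM, w, hw⟩, hcomp⟩
    have hψmem := nfOf_mem M φ.vars φ.md w
    have hψsat := nfOf_sat M φ.vars φ.md w
    refine ⟨nfOf M φ.vars φ.md w, ?_, ?_⟩
    · rw [NF_eq_NFsetF]
      exact hψmem
    · have h1 : Valid Logic.K (φ.imp (nfOf M φ.vars φ.md w)) := by
        rcases hcomp _ (vars_NFsetF hψmem) (md_NFsetF hψmem) with h | h
        · exact h
        · exfalso
          have h2 := h M hM w
          rw [sat_imp] at h2
          exact (sat_neg M _ w).mp (h2 hw) hψsat
      intro M' hM' w'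
      refine ⟨h1 M' hM' w', ?_⟩
      rw [sat_imp]
      intro hψ'
      exact (agree φ.vars φ φ.md _ hψmem (le_refl _) (le_refl _)
        M w M' w' hψsat hψ').mp hw
  · rintro ⟨ψ, hψNF, hval⟩
    rw [NF_eq_NFsetF] at hψNF
    have hψmem : ψ ∈ NFsetF φ.vars φ.md := hψNF
    have hall : ψ ∈ NFallF φ.vars φ.md := mem_NFallF.mpr ⟨φ.md, le_refl _, hψmem⟩
    set M0 := bigModel φ.vars φ.md with hM0def
    have hM0 : M0.IsFor Logic.K := isForK M0
    let s0 : M0.W := ⟨ψ, hall⟩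
    have hs0 : M0.sat s0 ψ := bigModel_sat _ _ _ _ hψmem hall
    have hs0φ : M0.sat s0 φ := by
      have h2 := (hval M0 hM0 s0).2
      rw [sat_imp] at h2
      exact h2 hs0
    refine ⟨⟨M0, hM0, s0, hs0φ⟩, ?_⟩
    intro χ hvars hmd
    by_cases hc : M0.sat s0 χ
    · left
      intro M hM w
      rw [sat_imp]
      intro hwφ
      have hwψ : M.sat w ψ := by
        have h1 := (hval M hM w).1
        rw [sat_imp] at h1
        exact h1 hwφ
      exact (agree φ.vars χ φ.md ψ hψmem hvars hmd M0 s0 M w hs0 hwψ).mp hc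
    · right
      intro M hM w
      rw [sat_imp]
      intro hwφ
      have hwψ : M.sat w ψ := by
        have h1 := (hval M hM w).1
        rw [sat_imp] at h1
        exact h1 hwφ
      rw [sat_neg]
      intro hcon
      exact hc ((agree φ.vars χ φ.md ψ hψmem hvars hmd M w M0 s0 hwψ hs0).mp hcon)
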